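/- Let X be a Peano continuum and let x ∈ X be a point of Menger order 2 that is a local cut point but not a cut point of X. Then there exist a Peano continuum X̂ and a continuous surjection φ : X̂ → X such that φ⁻¹(y) is a singleton for every y ≠ x, and φ⁻¹(x) consists of exactly two endpoints of X̂. -/

import Mathlib

open Set Topology

def IsCutPoint {X : Type*} [TopologicalSpace X] (x : X) : Prop :=
  ¬ IsPreconnected ({x}ᶜ : Set X)

def IsLocalCutPoint {X : Type*} [TopologicalSpace X] (x : X) : Prop :=
  ∃ U : Set X, IsOpen U ∧ x ∈ U ∧ IsConnected U ∧ ¬ IsPreconnected (U \ {x})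

def MengerOrderLE {X : Type*} [TopologicalSpace X] (x : X) (n : ℕ) : Prop :=
  ∀ U ∈ 𝓝 x, ∃ V ∈ 𝓝 x, V ⊆ U ∧ (frontier V).Finite ∧ (frontier V).ncard ≤ n

/-- `x` is an endpoint: it has a neighborhood basis of sets with one-point
boundaries. -/
def IsEndpoint {X : Type*} [TopologicalSpace X] (x : X) : Prop :=
  ∀ U ∈ 𝓝 x, ∃ V ∈ 𝓝 x, V ⊆ U ∧ ∃ p, frontier V = {p}

/-- Auxiliary data: a connected open neighborhood `U` of `x`, a separation `A, B` of
`U \ {x}`, and a radius `ε` with `closedBall x ε ⊆ U`. -/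
structure CutSetup (X : Type) [MetricSpace X] (x : X) where
  U : Set X
  A : Set X
  B : Set X
  ε : ℝ
  hε : 0 < ε
  hUopen : IsOpen U
  hxU : x ∈ U
  hUconn : IsConnected U
  hAopen : IsOpen A
  hBopen : IsOpen B
  hABdisj : A ∩ B = ∅
  hABU : A ∪ B = U \ {x}
  hAne : A.Nonempty
  hBne : B.Nonempty
  hball : Metric.closedBall x ε ⊆ U

namespace CutSetup

variable {X : Type} [MetricSpace X] {x : X} (S : CutSetup X x)

/-- the bump function -/
noncomputable def bump : X → ℝ := fun y => max 0 (1 - dist x y / S.ε)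

lemma bump_cont : Continuous S.bump := by
  apply continuous_const.max
  exact continuous_const.sub ((continuous_const.dist continuous_id).div_const _)

lemma bump_nonneg (y : X) : 0 ≤ S.bump y := le_max_left _ _

lemma bump_le_one (y : X) : S.bump y ≤ 1 := by
  apply max_le (by norm_num)
  have : 0 ≤ dist x y / S.ε := div_nonneg dist_nonneg S.hε.le
  linarith

lemma bump_x : S.bump x = 1 := by simp [bump]

lemma bump_gt {s : ℝ} {y : X} (hy : dist x y < S.ε * s) : 1 - s < S.bump y := by
  have h1 : dist x y / S.ε < s := (div_lt_iff₀' S.hε).mpr hy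
  have h2 := le_max_right 0 (1 - dist x y / S.ε)
  have : S.bump y = 0 ⊔ (1 - dist x y / S.ε) := rfl
  rw [this]
  linarith

lemma bump_eq_zero {y : X} (hy : S.ε ≤ dist x y) : S.bump y = 0 := by
  apply max_eq_left
  have h1 : (1:ℝ) ≤ dist x y / S.ε := (one_le_div S.hε).mpr hy
  linarith

/-- the split function: `0` on the `A`-side, the bump on the `B`-side. -/
noncomputable def f : X → ℝ := S.B.indicator S.bump

lemma f_nonneg (y : X) : 0 ≤ S.f y :=
  Set.indicator_nonneg (fun z _ => S.bump_nonneg z) y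

lemma f_le_one (y : X) : S.f y ≤ 1 :=
  Set.indicator_le' (fun z _ => S.bump_le_one z) (fun _ _ => by norm_num) y

lemma f_eq_bump_of_mem {y : X} (hy : y ∈ S.B) : S.f y = S.bump y :=
  Set.indicator_of_mem hy _

lemma f_eq_zero_of_notMem {y : X} (hy : y ∉ S.B) : S.f y = 0 :=
  Set.indicator_of_notMem hy _

lemma x_notMem_A : x ∉ S.A := fun h => by
  have : x ∈ U S \ {x} := S.hABU ▸ Or.inl h
  exact this.2 rfl

lemma x_notMem_B : x ∉ S.B := fun h => by
  have : x ∈ U S \ {x} := S.hABU ▸ Or.inr h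
  exact this.2 rfl

lemma A_subset : S.A ⊆ S.U \ {x} := fun y hy => S.hABU ▸ Or.inl hy

lemma B_subset : S.B ⊆ S.U \ {x} := fun y hy => S.hABU ▸ Or.inr hy

lemma f_eq_zero_of_mem_A {y : X} (hy : y ∈ S.A) : S.f y = 0 :=
  S.f_eq_zero_of_notMem (fun hB => by
    have : y ∈ S.A ∩ S.B := ⟨hy, hB⟩
    rw [S.hABdisj] at this; exact this)

end CutSetup

section Sides
variable {X : Type} [TopologicalSpace X] [T1Space X] {x : X} {U C D : Set X}

lemma open_inter_closure_empty {C D : Set X} (hC : IsOpen C) (hCD : C ∩ D = ∅) :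
    C ∩ closure D = ∅ := by
  apply eq_empty_of_subset_empty
  calc C ∩ closure D ⊆ closure (C ∩ D) := hC.inter_closure
    _ = ∅ := by rw [hCD, closure_empty]

lemma mem_closure_side (hU : IsOpen U) (hxU : x ∈ U) (hUconn : IsConnected U)
    (hC : IsOpen C) (hD : IsOpen D) (hCD : C ∩ D = ∅) (hunion : C ∪ D = U \ {x})
    (hCne : C.Nonempty) : x ∈ closure C := by
  by_contra hx
  have hCU : C ⊆ U := fun y hy => ((hunion ▸ Or.inl hy : y ∈ U \ {x})).1
  have hv : IsOpen (D ∪ (U ∩ (closure C)ᶜ)) := hD.union (hU.inter isClosed_closure.isOpen_compl)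
  obtain ⟨y, hy⟩ := hUconn.isPreconnected C (D ∪ (U ∩ (closure C)ᶜ)) hC hv
    (by
      intro z hz
      by_cases hzx : z = x
      · exact Or.inr (Or.inr ⟨hzx ▸ hxU, by rw [hzx]; exact hx⟩)
      · rcases (hunion ▸ ⟨hz, hzx⟩ : z ∈ C ∪ D) with h | h
        · exact Or.inl h
        · exact Or.inr (Or.inl h))
    (⟨hCne.choose, hCU hCne.choose_spec, hCne.choose_spec⟩)
    (⟨x, hxU, Or.inr ⟨hxU, hx⟩⟩)
  rcases hy.2.2 with h | h
  · exact (by rw [← hCD]; exact ⟨hy.2.1, h⟩ : y ∈ (∅ : Set X))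
  · exact h.2 (subset_closure hy.2.1)

variable [LocallyConnectedSpace X]

lemma x_mem_closure_componentIn {V : Set X} (hV : IsOpen V) (hxV : x ∈ V)
    (hVconn : IsPreconnected V) {y : X} (hy : y ∈ V \ {x}) :
    x ∈ closure (connectedComponentIn (V \ {x}) y) := by
  set K := connectedComponentIn (V \ {x}) y with hK
  have hVx : IsOpen (V \ {x}) := hV.sdiff isClosed_singleton
  have hKopen : IsOpen K := hVx.connectedComponentIn
  have hyK : y ∈ K := mem_connectedComponentIn hy
  by_contra hx
  have hVKopen : IsOpen (V \ K) := by
    rw [isOpen_iff_mem_nhds]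
    intro z hz
    by_cases hzx : z = x
    · subst hzx
      have : V ∩ (closure K)ᶜ ∈ 𝓝 z := (hV.inter isClosed_closure.isOpen_compl).mem_nhds ⟨hz.1, hx⟩
      exact Filter.mem_of_superset this (fun w hw => ⟨hw.1, fun hwK => hw.2 (subset_closure hwK)⟩)
    · have hz' : z ∈ V \ {x} := ⟨hz.1, hzx⟩
      have hz'' : z ∈ connectedComponentIn (V \ {x}) z := mem_connectedComponentIn hz'
      have : connectedComponentIn (V \ {x}) z ⊆ V \ K := by
        intro w hw
        refine ⟨(connectedComponentIn_subset _ _ hw).1, fun hwK => hz.2 ?_⟩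
        rw [hK, connectedComponentIn_eq hwK, ← connectedComponentIn_eq hw]
        exact hz''
      exact Filter.mem_of_superset (hVx.connectedComponentIn.mem_nhds hz'') this
  obtain ⟨w, hw⟩ := hVconn K (V \ K) hKopen hVKopen
    (fun z hz => (em (z ∈ K)).imp id (fun h => ⟨hz, h⟩))
    ⟨y, hy.1, hyK⟩ ⟨x, hxV, hxV, fun hxK => hx (subset_closure hxK)⟩
  exact hw.2.2.2 hw.2.1

lemma preconn_side_union (hU : IsOpen U) (hUconn : IsConnected U)
    (hC : IsOpen C) (hD : IsOpen D) (hCD : C ∩ D = ∅) (hunion : C ∪ D = U \ {x})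
    {V : Set X} (hV : IsOpen V) (hxV : x ∈ V) (hVconn : IsPreconnected V)
    (hVU : V ⊆ U) : IsPreconnected ({x} ∪ (V ∩ C)) := by
  have hVx : V \ {x} ⊆ C ∪ D := by
    rw [hunion]; exact fun z hz => ⟨hVU hz.1, hz.2⟩
  have key : {x} ∪ (V ∩ C) =
      ⋃₀ (insert {x} {s | ∃ y ∈ V ∩ C, s = insert x (connectedComponentIn (V \ {x}) y)}) := by
    apply Subset.antisymm
    · rintro z (hz | hz)
      · exact ⟨{x}, mem_insert _ _, hz⟩
      · refine ⟨insert x (connectedComponentIn (V \ {x}) z), Or.inr ⟨z, hz, rfl⟩, Or.inr ?_⟩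
        exact mem_connectedComponentIn ⟨hz.1, fun h =>
          (hunion ▸ Or.inl hz.2 : z ∈ U \ {x}).2 h⟩
    · rintro z ⟨s, hs | ⟨y, hy, rfl⟩, hzs⟩
      · exact Or.inl (hs ▸ hzs)
      · rcases hzs with h | h
        · exact Or.inl h
        · have hyV : y ∈ V \ {x} := ⟨hy.1, fun hh => (hunion ▸ Or.inl hy.2 : y ∈ U \ {x}).2 hh⟩
          have h1 : connectedComponentIn (V \ {x}) y ⊆ C :=
            isPreconnected_connectedComponentIn.subset_left_of_subset_union hC hD
              (disjoint_iff_inter_eq_empty.mpr hCD)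
              ((connectedComponentIn_subset _ _).trans hVx)
              ⟨y, mem_connectedComponentIn hyV, hy.2⟩
          exact Or.inr ⟨(connectedComponentIn_subset _ _ h).1, h1 h⟩
  rw [key]
  apply isPreconnected_sUnion x
  · rintro s (hs | ⟨y, hy, rfl⟩)
    · exact hs ▸ rfl
    · exact mem_insert _ _
  · rintro s (hs | ⟨y, hy, rfl⟩)
    · exact hs ▸ isPreconnected_singleton
    · have hyV : y ∈ V \ {x} := ⟨hy.1, fun hh => (hunion ▸ Or.inl hy.2 : y ∈ U \ {x}).2 hh⟩
      refine isPreconnected_connectedComponentIn.subset_closure (subset_insert _ _) ?_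
      intro z hz
      rcases hz with h | h
      · exact h ▸ x_mem_closure_componentIn hV hxV hVconn hyV
      · exact subset_closure h

end Sides

namespace CutSetup

variable {X : Type} [MetricSpace X] {x : X} (S : CutSetup X x)

lemma f_contOn : ContinuousOn S.f ({x}ᶜ : Set X) := by
  intro y hy
  apply ContinuousAt.continuousWithinAt
  by_cases hyU : y ∈ S.U
  · have hy' : y ∈ S.A ∪ S.B := S.hABU ▸ ⟨hyU, hy⟩
    rcases hy' with h | h
    · apply continuousAt_const.congr
      filter_upwards [S.hAopen.mem_nhds h] with z hz
      exact (S.f_eq_zero_of_mem_A hz).symm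
    · apply S.bump_cont.continuousAt.congr
      filter_upwards [S.hBopen.mem_nhds h] with z hz
      exact (S.f_eq_bump_of_mem hz).symm
  · have hdist : S.ε < dist x y := by
      by_contra hle
      exact hyU (S.hball (by rw [Metric.mem_closedBall, dist_comm]; linarith))
    apply continuousAt_const.congr
    have : {z | S.ε < dist x z} ∈ 𝓝 y :=
      (isOpen_lt continuous_const (continuous_const.dist continuous_id)).mem_nhds hdist
    filter_upwards [this] with z hz
    by_cases hzB : z ∈ S.B
    · rw [S.f_eq_bump_of_mem hzB, S.bump_eq_zero hz.le]
    · rw [S.f_eq_zero_of_notMem hzB]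

/-- graph of `f` over the punctured space -/
def G : Set (X × ℝ) := {p | p.1 ≠ x ∧ p.2 = S.f p.1}

/-- the resolved space, as a subset of `X × ℝ` -/
def Yset : Set (X × ℝ) := closure S.G

lemma G_subset_Yset : S.G ⊆ S.Yset := subset_closure

lemma mem_G {y : X} (hy : y ≠ x) : (y, S.f y) ∈ S.G := ⟨hy, rfl⟩

lemma fiber_eq {p : X × ℝ} (hp : p ∈ S.Yset) (hpx : p.1 ≠ x) : p.2 = S.f p.1 := by
  by_contra hne
  set δ := |p.2 - S.f p.1| with hδ
  have hδpos : 0 < δ := abs_pos.mpr (sub_ne_zero.mpr hne)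
  have hcont : ContinuousAt S.f p.1 :=
    (S.f_contOn p.1 hpx).continuousAt (isOpen_compl_singleton.mem_nhds hpx)
  have h1 : {y | |S.f y - S.f p.1| < δ / 2} ∈ 𝓝 p.1 := by
    have h0 := hcont (Metric.ball_mem_nhds (S.f p.1) (show (0:ℝ) < δ/2 by linarith))
    rw [Filter.mem_map] at h0
    apply Filter.mem_of_superset h0
    intro z hz
    simpa [Metric.mem_ball, Real.dist_eq] using hz
  have h2 : {t : ℝ | |t - p.2| < δ / 2} ∈ 𝓝 p.2 := by
    have := Metric.ball_mem_nhds p.2 (show (0:ℝ) < δ/2 by linarith)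
    exact Filter.mem_of_superset this (fun t ht => by simpa [Metric.mem_ball, Real.dist_eq] using ht)
  have hmem : {q : X × ℝ | q.1 ∈ {y | |S.f y - S.f p.1| < δ / 2} ∧
      q.2 ∈ {t : ℝ | |t - p.2| < δ / 2}} ∈ 𝓝 p := by
    rw [← @Prod.mk.eta _ _ p, nhds_prod_eq]
    exact Filter.prod_mem_prod h1 h2
  obtain ⟨q, hq, hqG⟩ := mem_closure_iff_nhds.mp hp _ hmem
  have e1 : |S.f q.1 - S.f p.1| < δ / 2 := hq.1
  have e2 : |q.2 - p.2| < δ / 2 := hq.2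
  rw [hqG.2] at e2
  have : |p.2 - S.f p.1| < δ := by
    calc |p.2 - S.f p.1| ≤ |p.2 - S.f q.1| + |S.f q.1 - S.f p.1| := abs_sub_le _ _ _
      _ < δ/2 + δ/2 := by
          rw [abs_sub_comm] at e2
          exact add_lt_add e2 e1
      _ = δ := by ring
  exact absurd this (by rw [← hδ]; exact lt_irrefl δ)

lemma a_mem : ((x, 0) : X × ℝ) ∈ S.Yset := by
  have hxA : x ∈ closure S.A :=
    mem_closure_side S.hUopen S.hxU S.hUconn S.hAopen S.hBopen S.hABdisj S.hABU S.hAne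
  have hcont : ContinuousAt (fun y : X => ((y, 0) : X × ℝ)) x :=
    (continuous_id.prodMk continuous_const).continuousAt
  have him : (fun y : X => ((y, 0) : X × ℝ)) '' S.A ⊆ S.G := by
    rintro p ⟨y, hy, rfl⟩
    exact ⟨fun h => S.x_notMem_A (by rwa [show y = x from h] at hy), (S.f_eq_zero_of_mem_A hy).symm⟩
  exact closure_mono him (mem_closure_image hcont hxA)

lemma b_mem : ((x, 1) : X × ℝ) ∈ S.Yset := by
  have hxB : x ∈ closure S.B :=
    mem_closure_side S.hUopen S.hxU S.hUconn S.hBopen S.hAopen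
      (by rw [inter_comm]; exact S.hABdisj) (by rw [union_comm]; exact S.hABU) S.hBne
  have hcont : ContinuousAt (fun y : X => ((y, S.bump y) : X × ℝ)) x :=
    (continuous_id.prodMk S.bump_cont).continuousAt
  have him : (fun y : X => ((y, S.bump y) : X × ℝ)) '' S.B ⊆ S.G := by
    rintro p ⟨y, hy, rfl⟩
    exact ⟨fun h => S.x_notMem_B (by rwa [show y = x from h] at hy), (S.f_eq_bump_of_mem hy).symm⟩
  have : ((x, S.bump x) : X × ℝ) ∈ closure S.G := closure_mono him (mem_closure_image hcont hxB)
  rwa [S.bump_x] at this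

lemma over_x {p : X × ℝ} (hp : p ∈ S.Yset) (hpx : p.1 = x) : p = (x, 0) ∨ p = (x, 1) := by
  set Φ : X × ℝ → ℝ := fun q => q.2 * (q.2 - S.bump q.1) with hΦ
  have hΦc : Continuous Φ := continuous_snd.mul (continuous_snd.sub (S.bump_cont.comp continuous_fst))
  have hzero : ∀ q ∈ S.G ∩ (Metric.ball x S.ε ×ˢ (univ : Set ℝ)), Φ q = 0 := by
    rintro q ⟨⟨hq1, hq2⟩, hqb, -⟩
    have hqU : q.1 ∈ S.U := S.hball (Metric.ball_subset_closedBall hqb)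
    have : q.1 ∈ S.A ∪ S.B := S.hABU ▸ ⟨hqU, hq1⟩
    rcases this with h | h
    · rw [hΦ]; simp only
      rw [hq2, S.f_eq_zero_of_mem_A h, zero_mul]
    · rw [hΦ]; simp only
      rw [hq2, S.f_eq_bump_of_mem h, sub_self, mul_zero]
  have hopen : IsOpen (Metric.ball x S.ε ×ˢ (univ : Set ℝ)) := Metric.isOpen_ball.prod isOpen_univ
  have hpmem : p ∈ closure (S.G ∩ (Metric.ball x S.ε ×ˢ (univ : Set ℝ))) := by
    have : p ∈ (Metric.ball x S.ε ×ˢ (univ : Set ℝ)) ∩ closure S.G :=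
      ⟨⟨by rw [hpx]; exact Metric.mem_ball_self S.hε, mem_univ _⟩, hp⟩
    have := hopen.inter_closure this
    rwa [inter_comm] at this
  have hΦp : Φ p = 0 := by
    have hcl : closure (S.G ∩ (Metric.ball x S.ε ×ˢ (univ : Set ℝ))) ⊆ Φ ⁻¹' {0} := by
      apply closure_minimal _ (isClosed_singleton.preimage hΦc)
      intro q hq; exact hzero q hq
    exact hcl hpmem
  have : p.2 * (p.2 - 1) = 0 := by
    have := hΦp
    rw [hΦ] at this; simp only at this
    rwa [hpx, S.bump_x] at this
  rcases mul_eq_zero.mp this with h | h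
  · left; rw [← @Prod.mk.eta _ _ p, hpx, h]
  · right; rw [← @Prod.mk.eta _ _ p, hpx, sub_eq_zero.mp h]

lemma Yset_compact [CompactSpace X] : IsCompact S.Yset := by
  have hsub : S.Yset ⊆ (univ : Set X) ×ˢ Icc (0:ℝ) 1 := by
    apply closure_minimal _ (isClosed_univ.prod isClosed_Icc)
    rintro p ⟨-, hp2⟩
    exact ⟨mem_univ _, hp2 ▸ ⟨S.f_nonneg _, S.f_le_one _⟩⟩
  exact ((isCompact_univ.prod isCompact_Icc).of_isClosed_subset isClosed_closure hsub)

lemma Yset_connected (hpc : IsPreconnected ({x}ᶜ : Set X)) : IsConnected S.Yset := by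
  have hGeq : S.G = (fun y => (y, S.f y)) '' ({x}ᶜ : Set X) := by
    apply Subset.antisymm
    · rintro ⟨y, t⟩ ⟨h1, h2⟩
      refine ⟨y, h1, ?_⟩
      simp only at h2 ⊢
      rw [h2]
    · rintro p ⟨y, hy, rfl⟩
      exact ⟨hy, rfl⟩
  refine ⟨⟨(x,0), S.a_mem⟩, ?_⟩
  rw [Yset]
  apply IsPreconnected.closure
  rw [hGeq]
  exact hpc.image _ (continuousOn_id.prodMk S.f_contOn)

lemma mem_side {y : X} (hyU : y ∈ S.U) (hyx : y ≠ x) : y ∈ S.A ∨ y ∈ S.B := by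
  have h : y ∈ S.U \ {x} := ⟨hyU, hyx⟩
  rwa [← S.hABU] at h

lemma slice_a {W : Set X} {s : ℝ} (hs0 : 0 < s) (hs : s ≤ 1/4) (hxW : x ∈ W)
    (hWU : W ⊆ S.U) (hWb : W ⊆ Metric.ball x (S.ε * (1 - s))) :
    S.Yset ∩ (W ×ˢ Metric.ball (0:ℝ) s) = (fun y => (y, (0:ℝ))) '' ({x} ∪ (W ∩ S.A)) := by
  apply Subset.antisymm
  · rintro p ⟨hpY, hpW, hpb⟩
    rw [Metric.mem_ball, Real.dist_eq, sub_zero] at hpb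
    by_cases hpx : p.1 = x
    · rcases S.over_x hpY hpx with h | h
      · exact ⟨x, Or.inl rfl, h.symm⟩
      · rw [h] at hpb; norm_num at hpb; linarith
    · have hfib := S.fiber_eq hpY hpx
      rcases S.mem_side (hWU hpW) hpx with h | h
      · refine ⟨p.1, Or.inr ⟨hpW, h⟩, ?_⟩
        have h0 : p.2 = 0 := by rw [hfib, S.f_eq_zero_of_mem_A h]
        show (p.1, (0:ℝ)) = p
        rw [← h0]
      · exfalso
        have hd : dist x p.1 < S.ε * (1 - s) := by
          have := hWb hpW; rwa [Metric.mem_ball, dist_comm] at this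
        have hb := S.bump_gt hd
        have : p.2 = S.bump p.1 := by rw [hfib, S.f_eq_bump_of_mem h]
        rw [this] at hpb
        have := abs_le.mp hpb.le
        linarith [this.2]
  · rintro p ⟨y, hy | hy, rfl⟩
    · subst hy
      exact ⟨S.a_mem, hxW, by simpa [Metric.mem_ball] using hs0⟩
    · have hyx : y ≠ x := fun h => S.x_notMem_A (h ▸ hy.2)
      have : ((y, (0:ℝ)) : X × ℝ) ∈ S.G := by
        refine ⟨hyx, ?_⟩
        simp only
        rw [S.f_eq_zero_of_mem_A hy.2]
      exact ⟨S.G_subset_Yset this, hy.1, by simpa [Metric.mem_ball] using hs0⟩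

lemma slice_b {W : Set X} {s : ℝ} (hs0 : 0 < s) (hs : s ≤ 1/4) (hxW : x ∈ W)
    (hWU : W ⊆ S.U) (hWb : W ⊆ Metric.ball x (S.ε * s)) :
    S.Yset ∩ (W ×ˢ Metric.ball (1:ℝ) s) = (fun y => (y, S.bump y)) '' ({x} ∪ (W ∩ S.B)) := by
  apply Subset.antisymm
  · rintro p ⟨hpY, hpW, hpb⟩
    rw [Metric.mem_ball, Real.dist_eq] at hpb
    by_cases hpx : p.1 = x
    · rcases S.over_x hpY hpx with h | h
      · rw [h] at hpb; norm_num at hpb; linarith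
      · refine ⟨x, Or.inl rfl, ?_⟩
        show (x, S.bump x) = p
        rw [S.bump_x, h]
    · have hfib := S.fiber_eq hpY hpx
      rcases S.mem_side (hWU hpW) hpx with h | h
      · exfalso
        have : p.2 = 0 := by rw [hfib, S.f_eq_zero_of_mem_A h]
        rw [this] at hpb; norm_num at hpb; linarith
      · refine ⟨p.1, Or.inr ⟨hpW, h⟩, ?_⟩
        have hb : p.2 = S.bump p.1 := by rw [hfib, S.f_eq_bump_of_mem h]
        show (p.1, S.bump p.1) = p
        rw [← hb]
  · rintro p ⟨y, hy | hy, rfl⟩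
    · have hy' : y = x := hy
      show ((y, S.bump y) : X × ℝ) ∈ _
      rw [hy', S.bump_x]
      exact ⟨S.b_mem, hxW, by simpa [Metric.mem_ball] using hs0⟩
    · have hyx : y ≠ x := fun h => S.x_notMem_B (h ▸ hy.2)
      have hmem : ((y, S.bump y) : X × ℝ) ∈ S.G := by
        refine ⟨hyx, ?_⟩
        simp only
        rw [S.f_eq_bump_of_mem hy.2]
      have hd : dist x y < S.ε * s := by
        have := hWb hy.1; rwa [Metric.mem_ball, dist_comm] at this
      have hb := S.bump_gt hd
      refine ⟨S.G_subset_Yset hmem, hy.1, ?_⟩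
      rw [Metric.mem_ball, Real.dist_eq, abs_sub_comm, abs_of_nonneg (by linarith [S.bump_le_one y])]
      linarith [S.bump_le_one y]

lemma preconn_of_image {T : Set ↥S.Yset} (h : IsPreconnected (Subtype.val '' T)) :
    IsPreconnected T :=
  (Topology.IsInducing.subtypeVal.isPreconnected_image).mp h

lemma image_preimage_eq_inter (T : Set (X × ℝ)) :
    Subtype.val '' ((Subtype.val : ↥S.Yset → X × ℝ) ⁻¹' T) = S.Yset ∩ T :=
  Subtype.image_preimage_coe _ _

lemma locallyConnected [LocallyConnectedSpace X] :
    LocallyConnectedSpace ↥S.Yset := by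
  rw [locallyConnectedSpace_iff_connected_subsets]
  intro z T hT
  obtain ⟨O, hO, hOT⟩ := (mem_nhds_subtype _ _ _).mp hT
  rw [← @Prod.mk.eta _ _ z.val] at hO
  obtain ⟨O₁, O₂, hO₁, hzO₁, hO₂, hzO₂, hprod⟩ := mem_nhds_prod_iff'.mp hO
  by_cases hzx : z.val.1 = x
  · rcases S.over_x z.prop hzx with hz | hz
    -- z = (x, 0)
    · have hz2 : z.val.2 = 0 := by rw [hz]
      have hz1 : z.val.1 = x := hzx
      obtain ⟨s₀, hs₀, hball₀⟩ := Metric.mem_nhds_iff.mp (hO₂.mem_nhds (hz2 ▸ hzO₂))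
      set s := min s₀ (1/4) with hsdef
      have hs0 : 0 < s := lt_min hs₀ (by norm_num)
      have hs : s ≤ 1/4 := min_le_right _ _
      have hballs : Metric.ball (0:ℝ) s ⊆ O₂ :=
        (Metric.ball_subset_ball (min_le_left _ _)).trans hball₀
      have hεs : 0 < S.ε * (1 - s) := by
        have := S.hε; nlinarith
      obtain ⟨V, hVsub, hVopen, hxV, hVconn⟩ :=
        locallyConnectedSpace_iff_subsets_isOpen_isConnected.mp ‹_› x
          (O₁ ∩ (S.U ∩ Metric.ball x (S.ε * (1 - s))))
          (((hO₁.inter (S.hUopen.inter Metric.isOpen_ball)).mem_nhds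
            ⟨hz1 ▸ hzO₁, S.hxU, Metric.mem_ball_self hεs⟩))
      refine ⟨Subtype.val ⁻¹' (V ×ˢ Metric.ball (0:ℝ) s), ?_, ?_, ?_⟩
      · refine ((hVopen.prod Metric.isOpen_ball).preimage continuous_subtype_val).mem_nhds ?_
        rw [mem_preimage, hz]
        exact ⟨hxV, Metric.mem_ball_self hs0⟩
      · apply S.preconn_of_image
        rw [S.image_preimage_eq_inter,
          S.slice_a hs0 hs hxV (fun y hy => (hVsub hy).2.1) (fun y hy => (hVsub hy).2.2)]
        exact (preconn_side_union S.hUopen S.hUconn S.hAopen S.hBopen S.hABdisj S.hABU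
          hVopen hxV hVconn.isPreconnected (fun y hy => (hVsub hy).2.1)).image _
          (continuous_id.prodMk continuous_const).continuousOn
      · intro w hw
        apply hOT
        rw [mem_preimage, ← @Prod.mk.eta _ _ w.val]
        exact hprod ⟨(hVsub hw.1).1, hballs hw.2⟩
    -- z = (x, 1)
    · have hz2 : z.val.2 = 1 := by rw [hz]
      have hz1 : z.val.1 = x := hzx
      obtain ⟨s₀, hs₀, hball₀⟩ := Metric.mem_nhds_iff.mp (hO₂.mem_nhds (hz2 ▸ hzO₂))
      set s := min s₀ (1/4) with hsdef
      have hs0 : 0 < s := lt_min hs₀ (by norm_num)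
      have hs : s ≤ 1/4 := min_le_right _ _
      have hballs : Metric.ball (1:ℝ) s ⊆ O₂ :=
        (Metric.ball_subset_ball (min_le_left _ _)).trans hball₀
      have hεs : 0 < S.ε * s := mul_pos S.hε hs0
      obtain ⟨V, hVsub, hVopen, hxV, hVconn⟩ :=
        locallyConnectedSpace_iff_subsets_isOpen_isConnected.mp ‹_› x
          (O₁ ∩ (S.U ∩ Metric.ball x (S.ε * s)))
          (((hO₁.inter (S.hUopen.inter Metric.isOpen_ball)).mem_nhds
            ⟨hz1 ▸ hzO₁, S.hxU, Metric.mem_ball_self hεs⟩))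
      refine ⟨Subtype.val ⁻¹' (V ×ˢ Metric.ball (1:ℝ) s), ?_, ?_, ?_⟩
      · refine ((hVopen.prod Metric.isOpen_ball).preimage continuous_subtype_val).mem_nhds ?_
        rw [mem_preimage, hz]
        exact ⟨hxV, Metric.mem_ball_self hs0⟩
      · apply S.preconn_of_image
        rw [S.image_preimage_eq_inter,
          S.slice_b hs0 hs hxV (fun y hy => (hVsub hy).2.1) (fun y hy => (hVsub hy).2.2)]
        exact (preconn_side_union S.hUopen S.hUconn S.hBopen S.hAopen
          (by rw [inter_comm]; exact S.hABdisj) (by rw [union_comm]; exact S.hABU)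
          hVopen hxV hVconn.isPreconnected (fun y hy => (hVsub hy).2.1)).image _
          (continuous_id.prodMk S.bump_cont).continuousOn
      · intro w hw
        apply hOT
        rw [mem_preimage, ← @Prod.mk.eta _ _ w.val]
        exact hprod ⟨(hVsub hw.1).1, hballs hw.2⟩
  -- z over a point ≠ x
  · have hfib : z.val.2 = S.f z.val.1 := S.fiber_eq z.prop hzx
    have hcontAt : ContinuousAt S.f z.val.1 :=
      (S.f_contOn z.val.1 hzx).continuousAt (isOpen_compl_singleton.mem_nhds hzx)
    have hQ : {v : X | S.f v ∈ O₂} ∈ 𝓝 z.val.1 := hcontAt (hO₂.mem_nhds (hfib ▸ hzO₂))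
    obtain ⟨V, hV, hVconn, hVsub⟩ := locallyConnectedSpace_iff_connected_subsets.mp ‹_›
      z.val.1 (O₁ ∩ ({x}ᶜ ∩ {v : X | S.f v ∈ O₂}))
      (Filter.inter_mem (hO₁.mem_nhds hzO₁)
        (Filter.inter_mem (isOpen_compl_singleton.mem_nhds hzx) hQ))
    refine ⟨Subtype.val ⁻¹' (V ×ˢ (univ : Set ℝ)), ?_, ?_, ?_⟩
    · exact (mem_nhds_subtype _ _ _).mpr ⟨V ×ˢ univ,
        by rw [← @Prod.mk.eta _ _ z.val]; exact prod_mem_nhds hV Filter.univ_mem,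
        subset_refl _⟩
    · apply S.preconn_of_image
      rw [S.image_preimage_eq_inter]
      have heq : S.Yset ∩ (V ×ˢ (univ : Set ℝ)) = (fun v => (v, S.f v)) '' V := by
        apply Subset.antisymm
        · rintro p ⟨hpY, hpV, -⟩
          refine ⟨p.1, hpV, ?_⟩
          show (p.1, S.f p.1) = p
          rw [← S.fiber_eq hpY (hVsub hpV).2.1]
        · rintro p ⟨v, hv, rfl⟩
          exact ⟨S.G_subset_Yset (S.mem_G (hVsub hv).2.1), hv, mem_univ _⟩
      rw [heq]
      exact hVconn.image _ (continuousOn_id.prodMk (S.f_contOn.mono (fun v hv => (hVsub hv).2.1)))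
    · intro w hw
      apply hOT
      rw [mem_preimage, ← @Prod.mk.eta _ _ w.val]
      have h1 : w.val.1 ∈ V := hw.1
      have h2 : w.val.2 = S.f w.val.1 := S.fiber_eq w.prop (hVsub h1).2.1
      exact hprod ⟨(hVsub h1).1, by rw [h2]; exact (hVsub h1).2.2⟩

lemma closure_image_subset' [CompactSpace X] {g : X → X × ℝ} (hg : Continuous g) (T : Set X) :
    closure (g '' T) ⊆ g '' closure T :=
  closure_minimal (image_mono subset_closure)
    ((isClosed_closure.isCompact.image hg).isClosed)

lemma endpoint_pair [CompactSpace X] (h2 : MengerOrderLE x 2)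
    (hpc : IsPreconnected ({x}ᶜ : Set X)) {s ρ : ℝ} (hs0 : 0 < s) (hs : s ≤ 1/4) (hρ : 0 < ρ) :
    ∃ Na Nb : Set ↥S.Yset,
      Na ∈ 𝓝 (⟨(x,0), S.a_mem⟩ : ↥S.Yset) ∧ Nb ∈ 𝓝 (⟨(x,1), S.b_mem⟩ : ↥S.Yset) ∧
      Na ⊆ Subtype.val ⁻¹' (Metric.ball x ρ ×ˢ Metric.ball (0:ℝ) s) ∧
      Nb ⊆ Subtype.val ⁻¹' (Metric.ball x ρ ×ˢ Metric.ball (1:ℝ) s) ∧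
      (∃ p, frontier Na = {p}) ∧ (∃ q, frontier Nb = {q}) := by
  haveI : PreconnectedSpace ↥S.Yset :=
    Subtype.preconnectedSpace (S.Yset_connected hpc).isPreconnected
  have hεs : 0 < S.ε * s := mul_pos S.hε hs0
  have hopen : IsOpen (S.U ∩ (Metric.ball x ρ ∩ Metric.ball x (S.ε * s))) :=
    S.hUopen.inter (Metric.isOpen_ball.inter Metric.isOpen_ball)
  have hxmem : x ∈ S.U ∩ (Metric.ball x ρ ∩ Metric.ball x (S.ε * s)) :=
    ⟨S.hxU, Metric.mem_ball_self hρ, Metric.mem_ball_self hεs⟩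
  obtain ⟨r, hr0, hrsub⟩ := Metric.nhds_basis_closedBall.mem_iff.mp (hopen.mem_nhds hxmem)
  obtain ⟨W, hWnhds, hWsub, hWfin, hWcard⟩ := h2 (Metric.ball x r) (Metric.ball_mem_nhds x hr0)
  set W' := interior W with hW'def
  have hxW' : x ∈ W' := mem_interior_iff_mem_nhds.mpr hWnhds
  have hW'r : W' ⊆ Metric.ball x r := interior_subset.trans hWsub
  have hclW' : closure W' ⊆ Metric.closedBall x r :=
    (closure_mono hW'r).trans Metric.closure_ball_subset_closedBall
  have hW'U : W' ⊆ S.U := fun y hy =>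
    (hrsub (Metric.ball_subset_closedBall (hW'r hy))).1
  have hW'bs : W' ⊆ Metric.ball x (S.ε * s) := fun y hy =>
    (hrsub (Metric.ball_subset_closedBall (hW'r hy))).2.2
  have hW'ρ : W' ⊆ Metric.ball x ρ := fun y hy =>
    (hrsub (Metric.ball_subset_closedBall (hW'r hy))).2.1
  have hW'bs' : W' ⊆ Metric.ball x (S.ε * (1 - s)) := by
    refine hW'bs.trans (Metric.ball_subset_ball ?_)
    have := S.hε.le
    nlinarith
  set Na : Set ↥S.Yset := Subtype.val ⁻¹' (W' ×ˢ Metric.ball (0:ℝ) s) with hNadef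
  set Nb : Set ↥S.Yset := Subtype.val ⁻¹' (W' ×ˢ Metric.ball (1:ℝ) s) with hNbdef
  have hNaopen : IsOpen Na :=
    (isOpen_interior.prod Metric.isOpen_ball).preimage continuous_subtype_val
  have hNbopen : IsOpen Nb :=
    (isOpen_interior.prod Metric.isOpen_ball).preimage continuous_subtype_val
  have haNa : (⟨(x,0), S.a_mem⟩ : ↥S.Yset) ∈ Na := ⟨hxW', Metric.mem_ball_self hs0⟩
  have hbNb : (⟨(x,1), S.b_mem⟩ : ↥S.Yset) ∈ Nb := ⟨hxW', Metric.mem_ball_self hs0⟩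
  have hMa : Subtype.val '' Na = (fun y => (y, (0:ℝ))) '' ({x} ∪ (W' ∩ S.A)) := by
    rw [hNadef, S.image_preimage_eq_inter, S.slice_a hs0 hs hxW' hW'U hW'bs']
  have hMb : Subtype.val '' Nb = (fun y => (y, S.bump y)) '' ({x} ∪ (W' ∩ S.B)) := by
    rw [hNbdef, S.image_preimage_eq_inter, S.slice_b hs0 hs hxW' hW'U hW'bs]
  -- frontier of Na lies over frontier W with second coordinate 0
  have hclNa : closure Na = Subtype.val ⁻¹' closure (Subtype.val '' Na) :=
    Topology.IsInducing.subtypeVal.closure_eq_preimage_closure_image Na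
  have hclNb : closure Nb = Subtype.val ⁻¹' closure (Subtype.val '' Nb) :=
    Topology.IsInducing.subtypeVal.closure_eq_preimage_closure_image Nb
  have hFa : ∀ z ∈ frontier Na, z.val.1 ∈ frontier W ∧ z.val.2 = 0 ∧ z.val.1 ≠ x := by
    intro z hz
    rw [hNaopen.frontier_eq] at hz
    obtain ⟨hzc, hzn⟩ := hz
    rw [hclNa, mem_preimage, hMa] at hzc
    obtain ⟨y, hy, hyz⟩ := closure_image_subset' (continuous_id.prodMk continuous_const) _ hzc
    rw [closure_union, closure_singleton] at hy
    have hz2 : z.val.2 = 0 := by rw [← hyz]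
    have hz1 : z.val.1 = y := by rw [← hyz]; simp
    have hynW' : y ∉ W' := by
      intro hyW'
      exact hzn ⟨hz1 ▸ hyW', by rw [hz2]; exact Metric.mem_ball_self hs0⟩
    have hyx : y ≠ x := fun h => hynW' (h ▸ hxW')
    rcases hy with h | h
    · exact absurd h hyx
    · refine ⟨hz1 ▸ ⟨?_, hynW'⟩, hz2, hz1 ▸ hyx⟩
      exact closure_mono (inter_subset_left.trans interior_subset) h
  have hFb : ∀ z ∈ frontier Nb, z.val.1 ∈ frontier W ∧ 1 - s ≤ z.val.2 ∧ z.val.1 ≠ x := by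
    intro z hz
    rw [hNbopen.frontier_eq] at hz
    obtain ⟨hzc, hzn⟩ := hz
    rw [hclNb, mem_preimage, hMb] at hzc
    obtain ⟨y, hy, hyz⟩ := closure_image_subset' (continuous_id.prodMk S.bump_cont) _ hzc
    rw [closure_union, closure_singleton] at hy
    have hz2 : z.val.2 = S.bump y := by rw [← hyz]
    have hz1 : z.val.1 = y := by rw [← hyz]; simp
    rcases hy with h | h
    · exfalso
      apply hzn
      refine ⟨hz1 ▸ (h ▸ hxW'), ?_⟩
      rw [hz2, h, S.bump_x]
      exact Metric.mem_ball_self hs0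
    · have hyc : y ∈ Metric.ball x (S.ε * s) := by
        have : y ∈ closure W' := closure_mono inter_subset_left h
        exact hrsub (hclW' this) |>.2.2
      have hbump : 1 - s < S.bump y := S.bump_gt (by rwa [Metric.mem_ball, dist_comm] at hyc)
      have hball : z.val.2 ∈ Metric.ball (1:ℝ) s := by
        rw [hz2, Metric.mem_ball, Real.dist_eq, abs_sub_comm,
          abs_of_nonneg (by linarith [S.bump_le_one y])]
        linarith [S.bump_le_one y]
      have hynW' : y ∉ W' := fun hyW' => hzn ⟨hz1 ▸ hyW', hball⟩
      have hyx : y ≠ x := fun hh => hynW' (hh ▸ hxW')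
      refine ⟨hz1 ▸ ⟨?_, hynW'⟩, by rw [hz2]; linarith, hz1 ▸ hyx⟩
      exact closure_mono (inter_subset_left.trans interior_subset) h
  -- disjointness and nonemptiness
  have hdisj : Disjoint (frontier Na) (frontier Nb) := by
    rw [disjoint_left]
    intro z hza hzb
    have h1 := (hFa z hza).2.1
    have h2 := (hFb z hzb).2.1
    rw [h1] at h2
    linarith
  have hane : (frontier Na).Nonempty := by
    by_contra h
    rw [not_nonempty_iff_eq_empty] at h
    rcases isClopen_iff.mp (isClopen_iff_frontier_eq_empty.mpr h) with h' | h'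
    · rw [h'] at haNa; exact haNa
    · have : (⟨(x,1), S.b_mem⟩ : ↥S.Yset) ∈ Na := h' ▸ mem_univ _
      have := this.2
      rw [Metric.mem_ball, Real.dist_eq] at this
      norm_num at this
      linarith
  have hbne : (frontier Nb).Nonempty := by
    by_contra h
    rw [not_nonempty_iff_eq_empty] at h
    rcases isClopen_iff.mp (isClopen_iff_frontier_eq_empty.mpr h) with h' | h'
    · rw [h'] at hbNb; exact hbNb
    · have : (⟨(x,0), S.a_mem⟩ : ↥S.Yset) ∈ Nb := h' ▸ mem_univ _
      have := this.2
      rw [Metric.mem_ball, Real.dist_eq] at this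
      norm_num at this
      linarith
  -- counting
  set j : ↥S.Yset → X := fun z => z.val.1 with hjdef
  have hinj : InjOn j (frontier Na ∪ frontier Nb) := by
    intro z hz z' hz' hjz
    have hzx : z.val.1 ≠ x := by
      rcases hz with h | h
      exacts [(hFa z h).2.2, (hFb z h).2.2]
    have hzx' : z'.val.1 ≠ x := by
      rcases hz' with h | h
      exacts [(hFa z' h).2.2, (hFb z' h).2.2]
    have e1 : z.val.2 = S.f z.val.1 := S.fiber_eq z.prop hzx
    have e2 : z'.val.2 = S.f z'.val.1 := S.fiber_eq z'.prop hzx'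
    apply Subtype.ext
    have hj : z.val.1 = z'.val.1 := hjz
    rw [← @Prod.mk.eta _ _ z.val, ← @Prod.mk.eta _ _ z'.val, hj, e1, e2, hj]
  have himg : j '' (frontier Na ∪ frontier Nb) ⊆ frontier W := by
    rintro y ⟨z, hz | hz, rfl⟩
    exacts [(hFa z hz).1, (hFb z hz).1]
  have hfinU : (frontier Na ∪ frontier Nb).Finite :=
    Set.Finite.of_finite_image (hWfin.subset himg) hinj
  have hfa : (frontier Na).Finite := hfinU.subset subset_union_left
  have hfb : (frontier Nb).Finite := hfinU.subset subset_union_right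
  have hcard2 : (frontier Na).ncard + (frontier Nb).ncard ≤ 2 := by
    have e1 : (frontier Na ∪ frontier Nb).ncard = (frontier Na).ncard + (frontier Nb).ncard :=
      Set.ncard_union_eq hdisj hfa hfb
    have e2 : (j '' (frontier Na ∪ frontier Nb)).ncard = (frontier Na ∪ frontier Nb).ncard :=
      Set.ncard_image_of_injOn hinj
    have e3 : (j '' (frontier Na ∪ frontier Nb)).ncard ≤ (frontier W).ncard :=
      Set.ncard_le_ncard himg hWfin
    omega
  have ha1 : 1 ≤ (frontier Na).ncard := (Set.ncard_pos hfa).mpr hane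
  have hb1 : 1 ≤ (frontier Nb).ncard := (Set.ncard_pos hfb).mpr hbne
  have hae : (frontier Na).ncard = 1 := by omega
  have hbe : (frontier Nb).ncard = 1 := by omega
  refine ⟨Na, Nb, hNaopen.mem_nhds haNa, hNbopen.mem_nhds hbNb, ?_, ?_,
    Set.ncard_eq_one.mp hae, Set.ncard_eq_one.mp hbe⟩
  · intro w hw
    exact ⟨hW'ρ hw.1, hw.2⟩
  · intro w hw
    exact ⟨hW'ρ hw.1, hw.2⟩

end CutSetup

/-- If `x` has Menger order 2, is a local cut point but not a cut point of the
Peano continuum `X`, then `X` can be "cut" at `x`: there is a Peano continuum `X̂`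
and a continuous surjection `φ : X̂ → X` which is one-to-one over every `y ≠ x`,
while `φ⁻¹(x)` consists of exactly two endpoints of `X̂`. -/
theorem lifting_at_local_cut_point {X : Type} [MetricSpace X] [CompactSpace X]
    [ConnectedSpace X] [LocallyConnectedSpace X] (x : X)
    (h2 : MengerOrderLE x 2 ∧ ¬ MengerOrderLE x 1)
    (hloc : IsLocalCutPoint x) (hcut : ¬ IsCutPoint x) :
    ∃ (Y : Type) (mY : MetricSpace Y), CompactSpace Y ∧ ConnectedSpace Y ∧
      LocallyConnectedSpace Y ∧
      ∃ φ : Y → X, Continuous φ ∧ Function.Surjective φ ∧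
        (∀ y : X, y ≠ x → ∃! z : Y, φ z = y) ∧
        ∃ a b : Y, a ≠ b ∧ φ ⁻¹' {x} = {a, b} ∧ IsEndpoint a ∧ IsEndpoint b := by
  obtain ⟨U, hUopen, hxU, hUconn, hnp⟩ := hloc
  have hpc : IsPreconnected ({x}ᶜ : Set X) := not_not.mp hcut
  rw [IsPreconnected] at hnp
  push_neg at hnp
  obtain ⟨u, v, hu, hv, hsub, hne1, hne2, hempty⟩ := hnp
  set A := (U \ {x}) ∩ u with hAdef
  set B := (U \ {x}) ∩ v with hBdef
  have hAopen : IsOpen A := ((hUopen.sdiff isClosed_singleton).inter hu)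
  have hBopen : IsOpen B := ((hUopen.sdiff isClosed_singleton).inter hv)
  have hABdisj : A ∩ B = ∅ := by
    apply eq_empty_of_subset_empty
    rw [← hempty]
    rintro y ⟨⟨hy1, hy2⟩, hy3, hy4⟩
    exact ⟨hy1, hy2, hy4⟩
  have hABU : A ∪ B = U \ {x} := by
    rw [hAdef, hBdef, ← inter_union_distrib_left]
    exact inter_eq_left.mpr hsub
  obtain ⟨ε, hε0, hball⟩ := Metric.nhds_basis_closedBall.mem_iff.mp (hUopen.mem_nhds hxU)
  set S : CutSetup X x :=
    ⟨U, A, B, ε, hε0, hUopen, hxU, hUconn, hAopen, hBopen, hABdisj, hABU, hne1, hne2, hball⟩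
    with hSdef
  refine ⟨↥S.Yset, inferInstance, isCompact_iff_compactSpace.mp S.Yset_compact,
    Subtype.connectedSpace (S.Yset_connected hpc), S.locallyConnected,
    fun z => z.val.1, continuous_fst.comp continuous_subtype_val, ?_, ?_, ?_⟩
  · -- surjectivity
    intro y
    by_cases hy : y = x
    · exact ⟨⟨(x, 0), S.a_mem⟩, hy.symm⟩
    · exact ⟨⟨(y, S.f y), S.G_subset_Yset (S.mem_G hy)⟩, rfl⟩
  · -- unique fibers away from x
    intro y hy
    refine ⟨⟨(y, S.f y), S.G_subset_Yset (S.mem_G hy)⟩, rfl, ?_⟩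
    intro z hz
    have hz' : z.val.1 = y := hz
    apply Subtype.ext
    have h2' : z.val.2 = S.f z.val.1 := S.fiber_eq z.prop (by rw [hz']; exact hy)
    show z.val = (y, S.f y)
    rw [← @Prod.mk.eta _ _ z.val, h2', hz']
  · -- the two endpoints
    refine ⟨⟨(x, 0), S.a_mem⟩, ⟨(x, 1), S.b_mem⟩, ?_, ?_, ?_, ?_⟩
    · intro h
      have := congrArg (fun z : ↥S.Yset => (z : X × ℝ).2) h
      norm_num at this
    · ext z
      simp only [mem_preimage, mem_singleton_iff, mem_insert_iff]
      constructor
      · intro h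
        rcases S.over_x z.prop h with h' | h'
        · exact Or.inl (Subtype.ext h')
        · exact Or.inr (Subtype.ext h')
      · rintro (rfl | rfl) <;> rfl
    · -- endpoint a
      intro T hT
      obtain ⟨O, hO, hOT⟩ := (mem_nhds_subtype _ _ _).mp hT
      obtain ⟨O₁, O₂, hO₁, hxO₁, hO₂, h0O₂, hprod⟩ := mem_nhds_prod_iff'.mp hO
      obtain ⟨s₀, hs₀, hbs⟩ := Metric.mem_nhds_iff.mp (hO₂.mem_nhds h0O₂)
      obtain ⟨ρ, hρ, hbρ⟩ := Metric.mem_nhds_iff.mp (hO₁.mem_nhds hxO₁)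
      have hs0 : 0 < min s₀ (1/4) := lt_min hs₀ (by norm_num)
      have hs : min s₀ (1/4) ≤ 1/4 := min_le_right _ _
      obtain ⟨Na, Nb, hNa, hNb, hNas, hNbs, hpa, hpb⟩ :=
        S.endpoint_pair h2.1 hpc hs0 hs hρ
      refine ⟨Na, hNa, ?_, hpa⟩
      intro w hw
      apply hOT
      have := hNas hw
      rw [mem_preimage] at this ⊢
      apply hprod
      exact ⟨hbρ this.1, hbs ((Metric.ball_subset_ball (min_le_left _ _)) this.2)⟩
    · -- endpoint b
      intro T hT
      obtain ⟨O, hO, hOT⟩ := (mem_nhds_subtype _ _ _).mp hT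
      obtain ⟨O₁, O₂, hO₁, hxO₁, hO₂, h1O₂, hprod⟩ := mem_nhds_prod_iff'.mp hO
      obtain ⟨s₀, hs₀, hbs⟩ := Metric.mem_nhds_iff.mp (hO₂.mem_nhds h1O₂)
      obtain ⟨ρ, hρ, hbρ⟩ := Metric.mem_nhds_iff.mp (hO₁.mem_nhds hxO₁)
      have hs0 : 0 < min s₀ (1/4) := lt_min hs₀ (by norm_num)
      have hs : min s₀ (1/4) ≤ 1/4 := min_le_right _ _
      obtain ⟨Na, Nb, hNa, hNb, hNas, hNbs, hpa, hpb⟩ :=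
        S.endpoint_pair h2.1 hpc hs0 hs hρ
      refine ⟨Nb, hNb, ?_, hpb⟩
      intro w hw
      apply hOT
      have := hNbs hw
      rw [mem_preimage] at this ⊢
      apply hprod
      exact ⟨hbρ this.1, hbs ((Metric.ball_subset_ball (min_le_left _ _)) this.2)⟩
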